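/- Let ι be a finite nonempty index set, let y : ι → ℝ and δ : ι → ℝ with 0 ≤ δ_i ≤ 1 for all i, and let ε ∈ (0,1]. Then (ln(Σ_{i∈ι} (1+ε)^{y_i+δ_i}) − ln(Σ_{i∈ι} (1+ε)^{y_i})) / ln(1+ε) ≤ (1+ε) · (Σ_{i∈ι} δ_i (1+ε)^{y_i}) / (Σ_{i∈ι} (1+ε)^{y_i}). In words: if each exponent increases by at most 1, the smoothed maximum lmax p(y) := log_{1+ε} Σ_i (1+ε)^{y_i} increases by at most (1+ε) times the weighted average increase Σ_i δ_i (1+ε)^{y_i} / Σ_i (1+ε)^{y_i}. -/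

import Mathlib

/-- If each exponent increases by `δ_i ∈ [0,1]`, the smoothed maximum
`lmax(y) = log_{1+ε} ∑_i (1+ε)^{y_i}` increases by at most `(1+ε)` times the weighted
average increase `∑_i δ_i (1+ε)^{y_i} / ∑_i (1+ε)^{y_i}`. -/
theorem lmax_increase_le
    (ι : Type*) [Fintype ι] [Nonempty ι]
    (y δ : ι → ℝ) (hδ0 : ∀ i, 0 ≤ δ i) (hδ1 : ∀ i, δ i ≤ 1)
    (ε : ℝ) (hε : ε ∈ Set.Ioc (0 : ℝ) 1) :
    (Real.log (∑ i, (1 + ε) ^ (y i + δ i)) - Real.log (∑ i, (1 + ε) ^ (y i)))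
        / Real.log (1 + ε)
      ≤ (1 + ε) * (∑ i, δ i * (1 + ε) ^ (y i)) / (∑ i, (1 + ε) ^ (y i)) := by
  obtain ⟨hε0, hε1⟩ := hε
  have hb1 : (1 : ℝ) < 1 + ε := by linarith
  have hb0 : (0 : ℝ) < 1 + ε := by linarith
  have hlogb : 0 < Real.log (1 + ε) := Real.log_pos hb1
  set S : ℝ := ∑ i, (1 + ε) ^ (y i) with hS
  set T : ℝ := ∑ i, (1 + ε) ^ (y i + δ i) with hT
  set D : ℝ := ∑ i, δ i * (1 + ε) ^ (y i) with hD
  have hSpos : 0 < S :=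
    Finset.sum_pos (fun i _ => Real.rpow_pos_of_pos hb0 _) Finset.univ_nonempty
  have hTpos : 0 < T :=
    Finset.sum_pos (fun i _ => Real.rpow_pos_of_pos hb0 _) Finset.univ_nonempty
  have hD0 : 0 ≤ D :=
    Finset.sum_nonneg fun i _ =>
      mul_nonneg (hδ0 i) (Real.rpow_pos_of_pos hb0 _).le
  -- key pointwise bound
  have hkey : T ≤ S + ε * D := by
    have : ∀ i ∈ Finset.univ, (1 + ε) ^ (y i + δ i)
        ≤ (1 + ε) ^ (y i) + ε * (δ i * (1 + ε) ^ (y i)) := by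
      intro i _
      have h1 : (1 + ε) ^ (y i + δ i) = (1 + ε) ^ (y i) * (1 + ε) ^ (δ i) :=
        Real.rpow_add hb0 _ _
      have h2 : (1 + ε) ^ (δ i) ≤ 1 + δ i * ε :=
        rpow_one_add_le_one_add_mul_self (by linarith) (hδ0 i) (hδ1 i)
      have h3 : (0:ℝ) < (1 + ε) ^ (y i) := Real.rpow_pos_of_pos hb0 _
      calc (1 + ε) ^ (y i + δ i) = (1 + ε) ^ (y i) * (1 + ε) ^ (δ i) := h1
        _ ≤ (1 + ε) ^ (y i) * (1 + δ i * ε) := by nlinarith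
        _ = (1 + ε) ^ (y i) + ε * (δ i * (1 + ε) ^ (y i)) := by ring
    calc T ≤ ∑ i, ((1 + ε) ^ (y i) + ε * (δ i * (1 + ε) ^ (y i))) :=
          Finset.sum_le_sum this
      _ = S + ε * D := by rw [Finset.sum_add_distrib, ← Finset.mul_sum]
  -- log difference bound
  have hlog : Real.log T - Real.log S ≤ ε * D / S := by
    rw [← Real.log_div hTpos.ne' hSpos.ne']
    have := Real.log_le_sub_one_of_pos (div_pos hTpos hSpos)
    have hTS : T / S - 1 ≤ ε * D / S := by
      rw [div_sub_one hSpos.ne']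
      gcongr
      linarith
    linarith
  -- ε / log(1+ε) ≤ 1 + ε
  have hεlog : ε ≤ (1 + ε) * Real.log (1 + ε) := by
    have h := Real.log_le_sub_one_of_pos (show (0:ℝ) < 1 / (1 + ε) by positivity)
    rw [Real.log_div one_ne_zero hb0.ne', Real.log_one] at h
    have : -Real.log (1 + ε) ≤ 1 / (1 + ε) - 1 := by linarith
    have h2 : ε / (1 + ε) ≤ Real.log (1 + ε) := by
      have : 1 - 1 / (1 + ε) ≤ Real.log (1 + ε) := by linarith
      calc ε / (1 + ε) = 1 - 1 / (1 + ε) := by field_simp; ring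
        _ ≤ Real.log (1 + ε) := this
    calc ε = (1 + ε) * (ε / (1 + ε)) := by field_simp
      _ ≤ (1 + ε) * Real.log (1 + ε) := by
          exact mul_le_mul_of_nonneg_left h2 hb0.le
  calc (Real.log T - Real.log S) / Real.log (1 + ε)
      ≤ (ε * D / S) / Real.log (1 + ε) := by gcongr
    _ = (ε / Real.log (1 + ε)) * (D / S) := by ring
    _ ≤ (1 + ε) * (D / S) := by
        apply mul_le_mul_of_nonneg_right _ (div_nonneg hD0 hSpos.le)
        rw [div_le_iff₀ hlogb]; linarith
    _ = (1 + ε) * D / S := by ring
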